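/- Let n ≥ 1, let L_1, …, L_n be nonzero real numbers, let X_1, …, X_{2n} be the anisotropic Heisenberg vector fields on ℝ^{2n+1}, let w_1, …, w_{2n} be the weights w_j = 1/(2|L_j|) for 1 ≤ j ≤ n and w_j = 1/(2|L_{j−n}|) for n+1 ≤ j ≤ 2n, and set Q = 2n + 2. Define ρ(x_1,…,x_{2n},t) = ( (Σ_{j=1}^{n} 2|L_j| x_j² + Σ_{j=n+1}^{2n} 2|L_{j−n}| x_j²)² + 16 t² )^{1/4} and u = log ρ. Then u satisfies the weighted Q-Laplace equation Δ_Q u = M(u)^{Q−2} Σ_{i=1}^{2n} w_i X_i(X_i u) + (Q−2) M(u)^{Q−4} Σ_{i,j=1}^{2n} w_i w_j X_i(X_j u) · X_i u · X_j u = 0 at every point of ℝ^{2n+1} \ {0} where M(u) ≠ 0. -/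

import Mathlib

/-- Partial derivative of `f : ℝ^m → ℝ` in the `i`-th coordinate direction. -/
noncomputable def pderiv' {m : ℕ} (i : Fin m) (f : (Fin m → ℝ) → ℝ) (q : Fin m → ℝ) : ℝ :=
  fderiv ℝ f q (Pi.single i 1)

/-- The anisotropic Heisenberg vector fields on ℝ^{2n+1}. -/
noncomputable def X (n : ℕ) (L : Fin n → ℝ) (j : Fin (2*n))
    (f : (Fin (2*n+1) → ℝ) → ℝ) (q : Fin (2*n+1) → ℝ) : ℝ :=
  pderiv' ⟨(j : ℕ), by have := j.isLt; omega⟩ f q +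
    (if h : (j : ℕ) < n then
        -(L ⟨(j : ℕ), h⟩) * q ⟨(j : ℕ) + n, by have := j.isLt; omega⟩
      else
        (L ⟨(j : ℕ) - n, by have := j.isLt; omega⟩) * q ⟨(j : ℕ) - n, by have := j.isLt; omega⟩) *
      pderiv' ⟨2*n, by omega⟩ f q

/-- The weights `w_j = 1/(2|L_j|)` for `1 ≤ j ≤ n` and `w_j = 1/(2|L_{j−n}|)` for
`n+1 ≤ j ≤ 2n`. -/
noncomputable def wgt (n : ℕ) (L : Fin n → ℝ) (j : Fin (2*n)) : ℝ :=
  if h : (j : ℕ) < n then 1 / (2 * |L ⟨(j : ℕ), h⟩|)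
  else 1 / (2 * |L ⟨(j : ℕ) - n, by have := j.isLt; omega⟩|)

/-- `M(f) = (Σ_{j=1}^{2n} w_j (X_j f)²)^{1/2}`. -/
noncomputable def Mfun (n : ℕ) (L : Fin n → ℝ) (f : (Fin (2*n+1) → ℝ) → ℝ)
    (q : Fin (2*n+1) → ℝ) : ℝ :=
  Real.sqrt (∑ j : Fin (2*n), wgt n L j * (X n L j f q)^2)

/-- The gauge `ρ = ((Σ_{j=1}^{n} 2|L_j| x_j² + Σ_{j=n+1}^{2n} 2|L_{j−n}| x_j²)² + 16 t²)^{1/4}`. -/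
noncomputable def rho (n : ℕ) (L : Fin n → ℝ) (q : Fin (2*n+1) → ℝ) : ℝ :=
  ((∑ j : Fin (2*n),
      (if h : (j : ℕ) < n then 2 * |L ⟨(j : ℕ), h⟩|
       else 2 * |L ⟨(j : ℕ) - n, by have := j.isLt; omega⟩|) *
        (q ⟨(j : ℕ), by have := j.isLt; omega⟩)^2)^2
    + 16 * (q ⟨2*n, by omega⟩)^2) ^ ((1:ℝ)/4)


noncomputable section
namespace LogRho
open Real Finset ContinuousLinearMap

variable {n : ℕ} (L : Fin n → ℝ)

def ι (j : Fin (2*n)) : Fin (2*n+1) := ⟨(j:ℕ), by have := j.isLt; omega⟩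
def lastI (n : ℕ) : Fin (2*n+1) := ⟨2*n, by omega⟩

def c (j : Fin (2*n)) : ℝ :=
  if h : (j : ℕ) < n then 2 * |L ⟨(j : ℕ), h⟩|
  else 2 * |L ⟨(j : ℕ) - n, by have := j.isLt; omega⟩|

def tau (j : Fin (2*n)) : ℝ :=
  if h : (j : ℕ) < n then -(L ⟨(j : ℕ), h⟩ / |L ⟨(j : ℕ), h⟩|)
  else L ⟨(j : ℕ) - n, by have := j.isLt; omega⟩ / |L ⟨(j : ℕ) - n, by have := j.isLt; omega⟩|

def sg (j : Fin (2*n)) : Fin (2*n) :=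
  if h : (j : ℕ) < n then ⟨(j:ℕ) + n, by have := j.isLt; omega⟩
  else ⟨(j:ℕ) - n, by have := j.isLt; omega⟩

lemma ι_inj {i j : Fin (2*n)} (h : ι i = ι j) : i = j := by
  simpa [ι, Fin.ext_iff] using h

lemma ι_ne_last (j : Fin (2*n)) : ι j ≠ lastI n := by
  have := j.isLt
  simp [ι, lastI, Fin.ext_iff]; omega

lemma sg_sg (j : Fin (2*n)) : sg (sg j) = j := by
  have := j.isLt
  rcases lt_or_ge (j:ℕ) n with h | h
  · simp [sg, h, Fin.ext_iff]
  · have h2 : ¬ (j:ℕ) < n := not_lt.2 h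
    simp only [sg, h2, dif_neg]
    have h3 : (j:ℕ) - n < n := by omega
    simp [h3, Fin.ext_iff]; omega

lemma sg_ne (j : Fin (2*n)) : sg j ≠ j := by
  have := j.isLt
  rcases lt_or_ge (j:ℕ) n with h | h
  · simp [sg, h, Fin.ext_iff]; omega
  · have h2 : ¬ (j:ℕ) < n := not_lt.2 h
    simp [sg, h2, Fin.ext_iff]; omega

lemma c_sg (j : Fin (2*n)) : c L (sg j) = c L j := by
  have := j.isLt
  rcases lt_or_ge (j:ℕ) n with h | h
  · have h2 : ¬ ((j:ℕ) + n) < n := by omega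
    simp only [c, sg, h, dif_pos, h2, dif_neg]
    simp [Fin.ext_iff]
  · have h2 : ¬ (j:ℕ) < n := not_lt.2 h
    have h3 : (j:ℕ) - n < n := by omega
    simp [c, sg, h2, h3]

lemma tau_sg (j : Fin (2*n)) : tau L (sg j) = - tau L j := by
  have := j.isLt
  rcases lt_or_ge (j:ℕ) n with h | h
  · have h2 : ¬ ((j:ℕ) + n) < n := by omega
    simp only [tau, sg, h, dif_pos, h2, dif_neg]
    have : ((j:ℕ) + n) - n = (j:ℕ) := by omega
    simp [this]
  · have h2 : ¬ (j:ℕ) < n := not_lt.2 h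
    have h3 : (j:ℕ) - n < n := by omega
    simp [tau, sg, h2, h3]

variable (hL : ∀ j, L j ≠ 0)
include hL

lemma tau_sq (j : Fin (2*n)) : tau L j * tau L j = 1 := by
  unfold tau
  split <;>
  · first
    | rw [neg_mul_neg, div_mul_div_comm, abs_mul_abs_self,
        div_self (mul_self_ne_zero.2 (hL _))]
    | rw [div_mul_div_comm, abs_mul_abs_self, div_self (mul_self_ne_zero.2 (hL _))]

lemma c_pos (j : Fin (2*n)) : 0 < c L j := by
  unfold c
  split
  · have : (0:ℝ) < |L ⟨(j:ℕ), by assumption⟩| := abs_pos.2 (hL _); linarith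
  · have : (0:ℝ) < |L ⟨(j:ℕ) - n, by have := j.isLt; omega⟩| := abs_pos.2 (hL _); linarith

omit hL in
lemma wgt_eq (j : Fin (2*n)) : wgt n L j = 1 / c L j := by
  unfold wgt c; split <;> rfl

lemma bc_eq (j : Fin (2*n)) (q : Fin (2*n+1) → ℝ) :
    (if h : (j : ℕ) < n then
        -(L ⟨(j : ℕ), h⟩) * q ⟨(j : ℕ) + n, by have := j.isLt; omega⟩
      else
        (L ⟨(j : ℕ) - n, by have := j.isLt; omega⟩) * q ⟨(j : ℕ) - n, by have := j.isLt; omega⟩)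
      = tau L j * c L j * q (ι (sg j)) / 2 := by
  unfold tau c sg
  rcases lt_or_ge (j:ℕ) n with h | h
  · have hA : |L ⟨(j:ℕ), h⟩| ≠ 0 := abs_ne_zero.2 (hL _)
    simp only [h, dif_pos, ι]
    field_simp
  · have h2 : ¬ (j:ℕ) < n := not_lt.2 h
    have hA : |L ⟨(j:ℕ) - n, by have := j.isLt; omega⟩| ≠ 0 := abs_ne_zero.2 (hL _)
    simp only [h2, dif_neg, ι, dite_false, not_false_eq_true]
    field_simp


def prj (n : ℕ) (i : Fin (2*n+1)) : (Fin (2*n+1) → ℝ) →L[ℝ] ℝ :=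
  ContinuousLinearMap.proj i

omit hL in
lemma hasProj (i : Fin (2*n+1)) (q : Fin (2*n+1) → ℝ) :
    HasFDerivAt (fun q : Fin (2*n+1) → ℝ => q i) (prj n i) q :=
  (prj n i).hasFDerivAt

omit hL in
@[simp] lemma prj_apply (i : Fin (2*n+1)) (v : Fin (2*n+1) → ℝ) : prj n i v = v i := rfl

def Gf (q : Fin (2*n+1) → ℝ) : ℝ := ∑ j : Fin (2*n), c L j * (q (ι j))^2
def Pf (q : Fin (2*n+1) → ℝ) : ℝ := (Gf L q)^2 + 16 * (q (lastI n))^2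
def Af (j : Fin (2*n)) (q : Fin (2*n+1) → ℝ) : ℝ :=
  q (ι j) * Gf L q + 4 * tau L j * q (ι (sg j)) * q (lastI n)

def G' (q : Fin (2*n+1) → ℝ) : (Fin (2*n+1) → ℝ) →L[ℝ] ℝ :=
  ∑ j : Fin (2*n), (2 * c L j * q (ι j)) • prj n (ι j)

def P' (q : Fin (2*n+1) → ℝ) : (Fin (2*n+1) → ℝ) →L[ℝ] ℝ :=
  (2 * Gf L q) • G' L q + (32 * q (lastI n)) • prj n (lastI n)

def A' (j : Fin (2*n)) (q : Fin (2*n+1) → ℝ) : (Fin (2*n+1) → ℝ) →L[ℝ] ℝ :=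
  Gf L q • prj n (ι j) + q (ι j) • G' L q
    + (4 * tau L j * q (lastI n)) • prj n (ι (sg j))
    + (4 * tau L j * q (ι (sg j))) • prj n (lastI n)

omit hL in
lemma hasG (q : Fin (2*n+1) → ℝ) : HasFDerivAt (Gf L) (G' L q) q := by
  have h : ∀ j : Fin (2*n),
      HasFDerivAt (fun q : Fin (2*n+1) → ℝ => c L j * (q (ι j))^2)
        ((2 * c L j * q (ι j)) • prj n (ι j)) q := by
    intro j
    have h1 := hasProj (n := n) (ι j) q
    have h2 := ((h1.fun_mul h1).const_mul (c L j))
    have h3 : HasFDerivAt (fun q : Fin (2*n+1) → ℝ => c L j * (q (ι j) * q (ι j)))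
        ((2 * c L j * q (ι j)) • prj n (ι j)) q := by
      refine h2.congr_fderiv ?_
      ext v
      simp [smul_smul]
      ring
    convert h3 using 2 with q
    ring
  exact HasFDerivAt.fun_sum (fun j _ => h j)

omit hL in
lemma hasP (q : Fin (2*n+1) → ℝ) : HasFDerivAt (Pf L) (P' L q) q := by
  have hg := hasG L q
  have ht := hasProj (n := n) (lastI n) q
  have h1 := hg.fun_mul hg
  have h2 := ((ht.fun_mul ht).const_mul (16:ℝ))
  have h3 : HasFDerivAt (fun q => Gf L q * Gf L q + 16 * (q (lastI n) * q (lastI n)))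
      (P' L q) q := by
    refine (h1.add h2).congr_fderiv ?_
    ext v
    simp [P', smul_smul]
    ring
  convert h3 using 2 with q
  simp [Pf]
  ring

omit hL in
lemma hasA (j : Fin (2*n)) (q : Fin (2*n+1) → ℝ) :
    HasFDerivAt (Af L j) (A' L j q) q := by
  have hx := hasProj (n := n) (ι j) q
  have hy := hasProj (n := n) (ι (sg j)) q
  have ht := hasProj (n := n) (lastI n) q
  have h1 := hx.fun_mul (hasG L q)
  have h2 := ((hy.const_mul (4 * tau L j)).fun_mul ht)
  refine (h1.add h2).congr_fderiv ?_
  ext v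
  simp [A', smul_smul]
  ring

omit hL in
lemma iota_eq_iota {i j : Fin (2*n)} : ι i = ι j ↔ i = j := by
  simp [ι, Fin.ext_iff]

omit hL in
lemma last_ne_iota (i : Fin (2*n)) : lastI n ≠ ι i := fun h => ι_ne_last i h.symm

omit hL in
lemma G'x (q : Fin (2*n+1) → ℝ) (i : Fin (2*n)) :
    G' L q (Pi.single (ι i) 1) = 2 * c L i * q (ι i) := by
  simp only [G', ContinuousLinearMap.sum_apply, ContinuousLinearMap.smul_apply, prj_apply,
    Pi.single_apply, smul_eq_mul, iota_eq_iota, mul_ite, mul_one, mul_zero]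
  rw [Finset.sum_ite_eq' Finset.univ i]
  simp

omit hL in
lemma G't (q : Fin (2*n+1) → ℝ) :
    G' L q (Pi.single (lastI n) 1) = 0 := by
  simp only [G', ContinuousLinearMap.sum_apply, ContinuousLinearMap.smul_apply, prj_apply,
    Pi.single_apply, smul_eq_mul]
  apply Finset.sum_eq_zero
  intro j _
  rw [if_neg (ι_ne_last j), mul_zero]

omit hL in
lemma P'x (q : Fin (2*n+1) → ℝ) (i : Fin (2*n)) :
    P' L q (Pi.single (ι i) 1) = 4 * Gf L q * c L i * q (ι i) := by
  simp only [P', ContinuousLinearMap.add_apply, ContinuousLinearMap.smul_apply, prj_apply,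
    smul_eq_mul, G'x, Pi.single_apply, if_neg (last_ne_iota i)]
  ring

omit hL in
lemma P't (q : Fin (2*n+1) → ℝ) :
    P' L q (Pi.single (lastI n) 1) = 32 * q (lastI n) := by
  simp only [P', ContinuousLinearMap.add_apply, ContinuousLinearMap.smul_apply, prj_apply,
    smul_eq_mul, G't, Pi.single_apply, if_pos rfl, if_true]
  ring

omit hL in
lemma A'x (j : Fin (2*n)) (q : Fin (2*n+1) → ℝ) (i : Fin (2*n)) :
    A' L j q (Pi.single (ι i) 1)
      = (if j = i then Gf L q else 0) + 2 * c L i * q (ι i) * q (ι j)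
        + (if sg j = i then 4 * tau L j * q (lastI n) else 0) := by
  simp only [A', ContinuousLinearMap.add_apply, ContinuousLinearMap.smul_apply, prj_apply,
    smul_eq_mul, G'x, Pi.single_apply, iota_eq_iota, if_neg (last_ne_iota i)]
  split <;> split <;> ring

omit hL in
lemma A't (j : Fin (2*n)) (q : Fin (2*n+1) → ℝ) :
    A' L j q (Pi.single (lastI n) 1) = 4 * tau L j * q (ι (sg j)) := by
  simp only [A', ContinuousLinearMap.add_apply, ContinuousLinearMap.smul_apply, prj_apply,
    smul_eq_mul, G't, Pi.single_apply, if_pos rfl, if_true,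
    if_neg (ι_ne_last j), if_neg (ι_ne_last (sg j))]
  ring

lemma Pf_pos (q : Fin (2*n+1) → ℝ) (hq : q ≠ 0) : 0 < Pf L q := by
  have hGnn : 0 ≤ Gf L q :=
    Finset.sum_nonneg fun j _ => mul_nonneg (c_pos L hL j).le (sq_nonneg _)
  have hPnn : 0 ≤ Pf L q := by
    have := sq_nonneg (Gf L q); have := sq_nonneg (q (lastI n)); unfold Pf; nlinarith
  rcases hPnn.lt_or_eq with h | h
  · exact h
  exfalso
  have hG : Gf L q = 0 := by
    have := sq_nonneg (Gf L q); have := sq_nonneg (q (lastI n))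
    have : (Gf L q)^2 = 0 := by unfold Pf at h; nlinarith
    nlinarith
  have ht : q (lastI n) = 0 := by
    have := sq_nonneg (Gf L q); have h16 : (16:ℝ) * (q (lastI n))^2 = 0 := by
      unfold Pf at h; nlinarith
    nlinarith [sq_nonneg (q (lastI n))]
  have hx : ∀ j : Fin (2*n), q (ι j) = 0 := by
    intro j
    have hall := (Finset.sum_eq_zero_iff_of_nonneg
      (fun j (_ : j ∈ Finset.univ) => mul_nonneg (c_pos L hL j).le (sq_nonneg (q (ι j))))).1
      hG j (Finset.mem_univ j)
    have hc := (c_pos L hL j).ne'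
    have : (q (ι j))^2 = 0 := by
      rcases mul_eq_zero.1 hall with h' | h'
      · exact absurd h' hc
      · exact h'
    exact pow_eq_zero_iff (by norm_num) |>.1 this
  apply hq
  funext k
  rcases lt_or_ge (k : ℕ) (2*n) with hk | hk
  · have : k = ι ⟨(k:ℕ), hk⟩ := by simp [ι, Fin.ext_iff]
    rw [this, hx]; rfl
  · have : k = lastI n := by
      have := k.isLt; simp [lastI, Fin.ext_iff]; omega
    rw [this, ht]; rfl

omit hL in
lemma Pf_eventually (q : Fin (2*n+1) → ℝ) (hq : 0 < Pf L q) :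
    ∀ᶠ x in nhds q, 0 < Pf L x := by
  have hc : ContinuousAt (Pf L) q := (hasP L q).differentiableAt.continuousAt
  have := hc (Ioi_mem_nhds hq)
  filter_upwards [this] with x hx using hx

omit hL in
lemma rho_eq (q : Fin (2*n+1) → ℝ) : rho n L q = (Pf L q) ^ ((1:ℝ)/4) := rfl

omit hL in
lemma u_eventually (u : (Fin (2*n+1) → ℝ) → ℝ)
    (hu : u = fun q => Real.log (rho n L q))
    (q : Fin (2*n+1) → ℝ) (hq : 0 < Pf L q) :
    u =ᶠ[nhds q] fun x => (1/4 : ℝ) * Real.log (Pf L x) := by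
  filter_upwards [Pf_eventually L q hq] with x hx
  rw [hu]
  show Real.log (rho n L x) = _
  rw [rho_eq, Real.log_rpow hx]

omit hL in
lemma fderiv_u (u : (Fin (2*n+1) → ℝ) → ℝ)
    (hu : u = fun q => Real.log (rho n L q))
    (q : Fin (2*n+1) → ℝ) (hq : 0 < Pf L q) :
    fderiv ℝ u q = ((1:ℝ)/4 * (Pf L q)⁻¹) • P' L q := by
  have h : HasFDerivAt (fun x => (1/4 : ℝ) * Real.log (Pf L x))
      (((1:ℝ)/4) • ((Pf L q)⁻¹ • P' L q)) q := ((hasP L q).log hq.ne').const_mul (1/4)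
  rw [(u_eventually L u hu q hq).fderiv_eq, h.fderiv, smul_smul]

omit hL in
lemma X_apply (j : Fin (2*n)) (f : (Fin (2*n+1) → ℝ) → ℝ) (q : Fin (2*n+1) → ℝ) :
    X n L j f q = fderiv ℝ f q (Pi.single (ι j) 1) +
      (if h : (j : ℕ) < n then
        -(L ⟨(j : ℕ), h⟩) * q ⟨(j : ℕ) + n, by have := j.isLt; omega⟩
      else
        (L ⟨(j : ℕ) - n, by have := j.isLt; omega⟩) * q ⟨(j : ℕ) - n, by have := j.isLt; omega⟩) *
        fderiv ℝ f q (Pi.single (lastI n) 1) := rfl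

lemma Xu_eq (u : (Fin (2*n+1) → ℝ) → ℝ)
    (hu : u = fun q => Real.log (rho n L q))
    (q : Fin (2*n+1) → ℝ) (hq : 0 < Pf L q) (j : Fin (2*n)) :
    X n L j u q = c L j * (Af L j q / Pf L q) := by
  rw [X_apply, bc_eq L hL j q, fderiv_u L u hu q hq]
  simp only [ContinuousLinearMap.smul_apply, smul_eq_mul, P'x, P't]
  unfold Af
  field_simp
  ring

def XA (i j : Fin (2*n)) (q : Fin (2*n+1) → ℝ) : ℝ :=
  (if j = i then Gf L q else 0) + (if sg j = i then 4 * tau L j * q (lastI n) else 0)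
    + 2 * c L i * (q (ι i) * q (ι j) + tau L i * tau L j * q (ι (sg i)) * q (ι (sg j)))

lemma XXu_eq (u : (Fin (2*n+1) → ℝ) → ℝ)
    (hu : u = fun q => Real.log (rho n L q))
    (q : Fin (2*n+1) → ℝ) (hq : 0 < Pf L q) (i j : Fin (2*n)) :
    X n L i (X n L j u) q
      = c L j * (XA L i j q * Pf L q - 4 * c L i * Af L i q * Af L j q) / (Pf L q)^2 := by
  have hev : (X n L j u) =ᶠ[nhds q] fun x => c L j * (Af L j x / Pf L x) := by
    filter_upwards [Pf_eventually L q hq] with x hx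
    exact Xu_eq L hL u hu x hx j
  have hinv : HasFDerivAt (fun x => (Pf L x)⁻¹) ((-((Pf L q)^2)⁻¹) • P' L q) q :=
    (hasDerivAt_inv hq.ne').comp_hasFDerivAt q (hasP L q)
  have hV : HasFDerivAt (fun x => c L j * (Af L j x / Pf L x))
      ((c L j) • (Af L j q • ((-((Pf L q)^2)⁻¹) • P' L q) + (Pf L q)⁻¹ • A' L j q)) q := by
    have hmul := (hasA L j q).fun_mul hinv
    have := hmul.const_mul (c L j)
    exact this
  have hfd : fderiv ℝ (X n L j u) q
      = (c L j) • (Af L j q • ((-((Pf L q)^2)⁻¹) • P' L q) + (Pf L q)⁻¹ • A' L j q) := by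
    rw [hev.fderiv_eq, hV.fderiv]
  rw [X_apply, bc_eq L hL i q, hfd]
  simp only [ContinuousLinearMap.smul_apply, ContinuousLinearMap.add_apply, smul_eq_mul,
    P'x, P't, A'x, A't]
  unfold XA Af
  have hP := hq.ne'
  field_simp
  ring_nf

omit hL in
lemma sum_sg (F : Fin (2*n) → ℝ) : ∑ j : Fin (2*n), F (sg j) = ∑ j : Fin (2*n), F j :=
  Equiv.sum_comp (Function.Involutive.toPerm sg sg_sg) F

omit hL in
lemma sg_eq_iff {i j : Fin (2*n)} : sg j = i ↔ j = sg i := by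
  constructor
  · rintro rfl; rw [sg_sg]
  · rintro rfl; rw [sg_sg]

variable (q : Fin (2*n+1) → ℝ)

omit hL in
lemma sum1 : ∑ j : Fin (2*n), c L j * (q (ι (sg j)))^2 = Gf L q := by
  have h := sum_sg (fun j => c L j * (q (ι j))^2)
  calc ∑ j : Fin (2*n), c L j * (q (ι (sg j)))^2
      = ∑ j : Fin (2*n), c L (sg j) * (q (ι (sg j)))^2 :=
        Finset.sum_congr rfl (fun j _ => by rw [c_sg])
    _ = Gf L q := h

omit hL in
lemma sum2 : ∑ j : Fin (2*n), c L j * tau L j * q (ι j) * q (ι (sg j)) = 0 := by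
  have h := sum_sg (fun j => c L j * tau L j * q (ι j) * q (ι (sg j)))
  have h2 : ∀ j : Fin (2*n),
      c L (sg j) * tau L (sg j) * q (ι (sg j)) * q (ι (sg (sg j)))
        = -(c L j * tau L j * q (ι j) * q (ι (sg j))) := by
    intro j; rw [c_sg, tau_sg, sg_sg]; ring
  rw [Finset.sum_congr rfl (fun j _ => h2 j), Finset.sum_neg_distrib] at h
  linarith

lemma sumCA2 : ∑ j : Fin (2*n), c L j * (Af L j q)^2 = Gf L q * Pf L q := by
  have e : ∀ j : Fin (2*n), c L j * (Af L j q)^2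
      = (Gf L q)^2 * (c L j * (q (ι j))^2)
        + (8 * Gf L q * q (lastI n)) * (c L j * tau L j * q (ι j) * q (ι (sg j)))
        + (16 * (q (lastI n))^2) * (c L j * (q (ι (sg j)))^2) := by
    intro j
    unfold Af
    linear_combination (16 * c L j * (q (ι (sg j)))^2 * (q (lastI n))^2) * tau_sq L hL j
  rw [Finset.sum_congr rfl (fun j _ => e j), Finset.sum_add_distrib, Finset.sum_add_distrib,
    ← Finset.mul_sum, ← Finset.mul_sum, ← Finset.mul_sum, sum1, sum2]
  unfold Pf Gf
  ring

omit hL in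
lemma sumCAx : ∑ j : Fin (2*n), c L j * Af L j q * q (ι j) = (Gf L q)^2 := by
  have e : ∀ j : Fin (2*n), c L j * Af L j q * q (ι j)
      = Gf L q * (c L j * (q (ι j))^2)
        + (4 * q (lastI n)) * (c L j * tau L j * q (ι j) * q (ι (sg j))) := by
    intro j; unfold Af; ring
  rw [Finset.sum_congr rfl (fun j _ => e j), Finset.sum_add_distrib,
    ← Finset.mul_sum, ← Finset.mul_sum, sum2]
  unfold Gf
  ring

lemma sumCAtx : ∑ j : Fin (2*n), c L j * tau L j * Af L j q * q (ι (sg j))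
    = 4 * q (lastI n) * Gf L q := by
  have e : ∀ j : Fin (2*n), c L j * tau L j * Af L j q * q (ι (sg j))
      = Gf L q * (c L j * tau L j * q (ι j) * q (ι (sg j)))
        + (4 * q (lastI n)) * (c L j * (q (ι (sg j)))^2) := by
    intro j
    unfold Af
    linear_combination (4 * c L j * (q (ι (sg j)))^2 * (q (lastI n))) * tau_sq L hL j
  rw [Finset.sum_congr rfl (fun j _ => e j), Finset.sum_add_distrib,
    ← Finset.mul_sum, ← Finset.mul_sum, sum1, sum2]
  ring

omit hL in
lemma sumAntisym : ∑ j : Fin (2*n), c L j * tau L j * Af L (sg j) q * Af L j q = 0 := by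
  have h := sum_sg (fun j => c L j * tau L j * Af L (sg j) q * Af L j q)
  have h2 : ∀ j : Fin (2*n),
      c L (sg j) * tau L (sg j) * Af L (sg (sg j)) q * Af L (sg j) q
        = -(c L j * tau L j * Af L (sg j) q * Af L j q) := by
    intro j; rw [c_sg, tau_sg, sg_sg]; ring
  rw [Finset.sum_congr rfl (fun j _ => h2 j), Finset.sum_neg_distrib] at h
  linarith

lemma sum_diag_XA : ∑ i : Fin (2*n), XA L i i q = (2*n : ℝ) * Gf L q + 4 * Gf L q := by
  have e : ∀ i : Fin (2*n), XA L i i q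
      = Gf L q + 2 * (c L i * (q (ι i))^2) + 2 * (c L i * (q (ι (sg i)))^2) := by
    intro i
    unfold XA
    rw [if_pos rfl, if_neg (sg_ne i)]
    linear_combination (2 * c L i * (q (ι (sg i)))^2) * tau_sq L hL i
  rw [Finset.sum_congr rfl (fun i _ => e i), Finset.sum_add_distrib, Finset.sum_add_distrib,
    ← Finset.mul_sum, ← Finset.mul_sum, sum1, Finset.sum_const, Finset.card_univ,
    Fintype.card_fin, nsmul_eq_mul]
  push_cast
  unfold Gf
  ring

lemma sumT : ∑ i : Fin (2*n), ∑ j : Fin (2*n),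
    c L j * Af L i q * Af L j q * XA L i j q = 3 * (Gf L q)^2 * Pf L q := by
  have e : ∀ i j : Fin (2*n), c L j * Af L i q * Af L j q * XA L i j q
      = (if j = i then Gf L q * (c L j * Af L i q * Af L j q) else 0)
        + (if j = sg i then (4 * tau L j * q (lastI n)) * (c L j * Af L i q * Af L j q) else 0)
        + ((2 * (c L i * Af L i q * q (ι i))) * (c L j * Af L j q * q (ι j))
           + (2 * (c L i * tau L i * Af L i q * q (ι (sg i))))
              * (c L j * tau L j * Af L j q * q (ι (sg j)))) := by
    intro i j
    unfold XA
    simp only [sg_eq_iff]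
    split_ifs <;> ring
  have inner : ∀ i : Fin (2*n), ∑ j : Fin (2*n),
      c L j * Af L i q * Af L j q * XA L i j q
      = (Gf L q) * (c L i * Af L i q * Af L i q)
        + (-(4 * q (lastI n))) * (c L i * tau L i * Af L (sg i) q * Af L i q)
        + ((2 * (Gf L q)^2) * (c L i * Af L i q * q (ι i))
           + (8 * q (lastI n) * Gf L q) * (c L i * tau L i * Af L i q * q (ι (sg i)))) := by
    intro i
    rw [Finset.sum_congr rfl (fun j _ => e i j), Finset.sum_add_distrib,
      Finset.sum_add_distrib, Finset.sum_ite_eq' Finset.univ i, Finset.sum_ite_eq' Finset.univ (sg i),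
      Finset.sum_add_distrib, ← Finset.mul_sum, ← Finset.mul_sum, sumCAx, sumCAtx L hL q]
    simp only [Finset.mem_univ, if_true, c_sg, tau_sg]
    ring
  rw [Finset.sum_congr rfl (fun i _ => inner i), Finset.sum_add_distrib, Finset.sum_add_distrib,
    ← Finset.mul_sum, ← Finset.mul_sum]
  have h3 : ∑ i : Fin (2*n), ((2 * (Gf L q)^2) * (c L i * Af L i q * q (ι i))
      + (8 * q (lastI n) * Gf L q) * (c L i * tau L i * Af L i q * q (ι (sg i))))
      = (2 * (Gf L q)^2) * (Gf L q)^2 + (8 * q (lastI n) * Gf L q) * (4 * q (lastI n) * Gf L q) := by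
    rw [Finset.sum_add_distrib, ← Finset.mul_sum, ← Finset.mul_sum, sumCAx, sumCAtx L hL q]
  rw [h3]
  have h1 : ∑ i : Fin (2*n), c L i * Af L i q * Af L i q = Gf L q * Pf L q := by
    have := sumCA2 L hL q
    calc ∑ i : Fin (2*n), c L i * Af L i q * Af L i q
        = ∑ i : Fin (2*n), c L i * (Af L i q)^2 := Finset.sum_congr rfl (fun i _ => by ring)
      _ = Gf L q * Pf L q := this
  rw [h1, sumAntisym]
  unfold Pf
  ring

lemma hS1 (u : (Fin (2*n+1) → ℝ) → ℝ)
    (hu : u = fun q => Real.log (rho n L q)) (hq : 0 < Pf L q) :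
    ∑ i : Fin (2*n), wgt n L i * X n L i (X n L i u) q
      = (2*n : ℝ) * Gf L q / Pf L q := by
  have hp := hq.ne'
  have e : ∀ i : Fin (2*n), wgt n L i * X n L i (X n L i u) q
      = (Pf L q / (Pf L q)^2) * XA L i i q
        - (4 / (Pf L q)^2) * (c L i * (Af L i q)^2) := by
    intro i
    rw [wgt_eq, XXu_eq L hL u hu q hq]
    have hc := (c_pos L hL i).ne'
    field_simp
  rw [Finset.sum_congr rfl (fun i _ => e i), Finset.sum_sub_distrib,
    ← Finset.mul_sum, ← Finset.mul_sum, sum_diag_XA L hL q, sumCA2 L hL q]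
  field_simp
  ring

lemma hS2 (u : (Fin (2*n+1) → ℝ) → ℝ)
    (hu : u = fun q => Real.log (rho n L q)) (hq : 0 < Pf L q) :
    ∑ i : Fin (2*n), ∑ j : Fin (2*n),
        wgt n L i * wgt n L j * X n L i (X n L j u) q * X n L i u q * X n L j u q
      = -(Gf L q)^2 / (Pf L q)^2 := by
  have hp := hq.ne'
  have e : ∀ i j : Fin (2*n),
      wgt n L i * wgt n L j * X n L i (X n L j u) q * X n L i u q * X n L j u q
      = (Pf L q / (Pf L q)^4) * (c L j * Af L i q * Af L j q * XA L i j q)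
        - (4 / (Pf L q)^4) * ((c L i * (Af L i q)^2) * (c L j * (Af L j q)^2)) := by
    intro i j
    rw [wgt_eq, wgt_eq, XXu_eq L hL u hu q hq, Xu_eq L hL u hu q hq, Xu_eq L hL u hu q hq]
    have hci := (c_pos L hL i).ne'
    have hcj := (c_pos L hL j).ne'
    field_simp
  have inner : ∀ i : Fin (2*n), ∑ j : Fin (2*n),
      (wgt n L i * wgt n L j * X n L i (X n L j u) q * X n L i u q * X n L j u q)
      = (Pf L q / (Pf L q)^4) * (∑ j : Fin (2*n), c L j * Af L i q * Af L j q * XA L i j q)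
        - (4 / (Pf L q)^4) * ((c L i * (Af L i q)^2) * (Gf L q * Pf L q)) := by
    intro i
    rw [Finset.sum_congr rfl (fun j _ => e i j), Finset.sum_sub_distrib,
      ← Finset.mul_sum, ← Finset.mul_sum, ← Finset.mul_sum, sumCA2 L hL q]
  rw [Finset.sum_congr rfl (fun i _ => inner i), Finset.sum_sub_distrib,
    ← Finset.mul_sum, ← Finset.mul_sum, sumT L hL q]
  rw [show ∑ i : Fin (2*n), c L i * (Af L i q)^2 * (Gf L q * Pf L q)
      = (∑ i : Fin (2*n), c L i * (Af L i q)^2) * (Gf L q * Pf L q) from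
    (Finset.sum_mul _ _ _).symm, sumCA2 L hL q]
  field_simp
  ring

lemma hM2 (u : (Fin (2*n+1) → ℝ) → ℝ)
    (hu : u = fun q => Real.log (rho n L q)) (hq : 0 < Pf L q) :
    (Mfun n L u q)^2 = Gf L q / Pf L q := by
  have hp := hq.ne'
  have hnn : 0 ≤ ∑ j : Fin (2*n), wgt n L j * (X n L j u q)^2 := by
    apply Finset.sum_nonneg
    intro j _
    have := (c_pos L hL j)
    rw [wgt_eq]
    positivity
  rw [Mfun, Real.sq_sqrt hnn]
  have e : ∀ j : Fin (2*n), wgt n L j * (X n L j u q)^2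
      = (c L j * (Af L j q)^2) / (Pf L q)^2 := by
    intro j
    rw [wgt_eq, Xu_eq L hL u hu q hq]
    have hc := (c_pos L hL j).ne'
    field_simp
  rw [Finset.sum_congr rfl (fun j _ => e j), ← Finset.sum_div, sumCA2 L hL q]
  field_simp
end LogRho

theorem log_rho_weighted_Q_harmonic
    (n : ℕ) (hn : 1 ≤ n) (L : Fin n → ℝ) (hL : ∀ j, L j ≠ 0)
    (Q : ℝ) (hQ : Q = 2 * n + 2)
    (u : (Fin (2*n+1) → ℝ) → ℝ) (hu : u = fun q => Real.log (rho n L q)) :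
    ∀ q : Fin (2*n+1) → ℝ, q ≠ 0 → Mfun n L u q ≠ 0 →
      (Mfun n L u q) ^ (Q - 2) * ∑ i : Fin (2*n), wgt n L i * X n L i (X n L i u) q
        + (Q - 2) * (Mfun n L u q) ^ (Q - 4) *
            ∑ i : Fin (2*n), ∑ j : Fin (2*n),
              wgt n L i * wgt n L j * X n L i (X n L j u) q * X n L i u q * X n L j u q
      = 0 := by
  intro q hq hM
  have hPq : 0 < LogRho.Pf L q := LogRho.Pf_pos L hL q hq
  have hMpos : 0 < Mfun n L u q := lt_of_le_of_ne (Real.sqrt_nonneg _) (Ne.symm hM)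
  have h2 := LogRho.hM2 L hL q u hu hPq
  have hs1 := LogRho.hS1 L hL q u hu hPq
  have hs2 := LogRho.hS2 L hL q u hu hPq
  rw [hs1, hs2]
  have hrw : Mfun n L u q ^ (Q - 2) = Mfun n L u q ^ (Q - 4) * (Mfun n L u q)^2 := by
    rw [← Real.rpow_natCast (Mfun n L u q) 2, ← Real.rpow_add hMpos]
    norm_num
    congr 1
    ring
  rw [hrw, h2, hQ]
  have hp := hPq.ne'
  field_simp
  ring
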